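/- Let c > 0 be a real number, let g : ℕ → ℝ be a nonnegative function with g(n) ≥ 4c/5, set p(n) := n^{−g(n)}, and let s₁ := max{⌈25/c⌉, 3}. Then for every integer n ≥ 1 and every integer s ≥ s₁, the expected number of cliques of size s in the Erdős–Rényi random graph G(n,p(n)) is at most n^{−2}. -/

import Mathlib

open MeasureTheory
open scoped Classical

noncomputable def bernoulliMeasure (p : ℝ) : Measure Bool :=
  (PMF.bernoulli (min (Real.toNNReal p) 1) (min_le_right _ _)).toMeasure

noncomputable def erdosRenyi (n : ℕ) (p : ℝ) : Measure (Sym2 (Fin n) → Bool) :=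
  Measure.pi fun _ => bernoulliMeasure p

def IsCompleteOn {n : ℕ} (ω : Sym2 (Fin n) → Bool) (S : Finset (Fin n)) : Prop :=
  ∀ u ∈ S, ∀ v ∈ S, u ≠ v → ω s(u, v) = true

noncomputable def cliqueCount (n s : ℕ) (ω : Sym2 (Fin n) → Bool) : ℕ :=
  (Finset.univ.filter fun S : Finset (Fin n) => S.card = s ∧ IsCompleteOn ω S).card

instance bernoulliMeasure_prob (p : ℝ) : IsProbabilityMeasure (bernoulliMeasure p) :=
  PMF.toMeasure.isProbabilityMeasure _

instance erdosRenyi_prob (n : ℕ) (p : ℝ) : IsProbabilityMeasure (erdosRenyi n p) := by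
  unfold erdosRenyi; infer_instance

lemma bernoulliMeasure_true (p : ℝ) (hp1 : p ≤ 1) :
    bernoulliMeasure p {true} = ENNReal.ofReal p := by
  rw [bernoulliMeasure, PMF.toMeasure_apply_singleton _ _ (measurableSet_singleton _),
    PMF.bernoulli_apply]
  simp [min_eq_left (Real.toNNReal_le_one.2 hp1)]
  rfl

lemma isCompleteOn_eq_pi {n : ℕ} (S : Finset (Fin n)) :
    {ω : Sym2 (Fin n) → Bool | IsCompleteOn ω S} =
      Set.univ.pi (fun e => if e ∈ S.offDiag.image Sym2.mk.uncurry then ({true} : Set Bool)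
        else Set.univ) := by
  ext ω
  simp only [Set.mem_setOf_eq, Set.mem_univ_pi]
  constructor
  · intro h e
    by_cases he : e ∈ S.offDiag.image Sym2.mk.uncurry
    · obtain ⟨⟨u, v⟩, huv, rfl⟩ := Finset.mem_image.1 he
      obtain ⟨hu, hv, hne⟩ := Finset.mem_offDiag.1 huv
      rw [if_pos he]
      simpa using h u hu v hv hne
    · simp [he]
  · intro h u hu v hv hne
    have mem : s(u, v) ∈ S.offDiag.image Sym2.mk.uncurry :=
      Finset.mem_image.2 ⟨(u, v), Finset.mem_offDiag.2 ⟨hu, hv, hne⟩, rfl⟩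
    simpa [mem] using h s(u, v)

lemma prob_isCompleteOn {n : ℕ} (p : ℝ) (hp1 : p ≤ 1) (S : Finset (Fin n)) :
    erdosRenyi n p {ω | IsCompleteOn ω S} = ENNReal.ofReal p ^ (S.card.choose 2) := by
  rw [isCompleteOn_eq_pi, erdosRenyi, Measure.pi_pi]
  have : ∀ e : Sym2 (Fin n),
      bernoulliMeasure p (if e ∈ S.offDiag.image Sym2.mk.uncurry then ({true} : Set Bool) else Set.univ)
        = if e ∈ S.offDiag.image Sym2.mk.uncurry then ENNReal.ofReal p else 1 := by
    intro e
    split_ifs with he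
    · exact bernoulliMeasure_true p hp1
    · exact measure_univ
  rw [Finset.prod_congr rfl (fun e _ => this e), ← Finset.prod_filter,
    Finset.filter_mem_eq_inter, Finset.univ_inter, Finset.prod_const,
    Sym2.card_image_offDiag]

lemma measurableSet_isCompleteOn {n : ℕ} (S : Finset (Fin n)) :
    MeasurableSet {ω : Sym2 (Fin n) → Bool | IsCompleteOn ω S} := by
  rw [isCompleteOn_eq_pi]
  exact MeasurableSet.univ_pi (fun e => trivial)

/-- Let `c > 0`, `g ≥ 0` with `g(n) ≥ 4c/5`, `p(n) = n^{−g(n)}`, and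
`s₁ := max ⌈25/c⌉ 3`. Then for every `n ≥ 1` and every `s ≥ s₁`, the expected number of
cliques of size `s` in `G(n, p(n))` is at most `n^{−2}`. -/
theorem erdosRenyi_expected_cliqueCount_le_inv_sq
    (c : ℝ) (hc : 0 < c) (g : ℕ → ℝ) (hg : ∀ m, 0 ≤ g m)
    (hgc : ∀ m, 4 * c / 5 ≤ g m)
    (s₁ : ℕ) (hs₁ : s₁ = max ⌈(25 : ℝ) / c⌉₊ 3)
    (n : ℕ) (hn : 1 ≤ n) (s : ℕ) (hs : s₁ ≤ s) :
    ∫ ω, (cliqueCount n s ω : ℝ) ∂ erdosRenyi n ((n : ℝ) ^ (-(g n))) ≤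
      (n : ℝ) ^ (-2 : ℝ) := by
  set p : ℝ := (n : ℝ) ^ (-(g n)) with hp
  have hn1 : (1 : ℝ) ≤ (n : ℝ) := by exact_mod_cast hn
  have hp0 : 0 ≤ p := Real.rpow_nonneg (Nat.cast_nonneg n) _
  have hp1 : p ≤ 1 :=
    Real.rpow_le_one_of_one_le_of_nonpos hn1 (neg_nonpos.2 (hg n))
  -- rewrite clique count as a sum of indicators
  have hcount : ∀ ω : Sym2 (Fin n) → Bool, (cliqueCount n s ω : ℝ) =
      ∑ S ∈ Finset.univ.filter (fun S : Finset (Fin n) => S.card = s),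
        Set.indicator {ω' | IsCompleteOn ω' S} (fun _ => (1 : ℝ)) ω := by
    intro ω
    rw [cliqueCount]
    have : (Finset.univ.filter fun S : Finset (Fin n) => S.card = s ∧ IsCompleteOn ω S)
        = (Finset.univ.filter fun S : Finset (Fin n) => S.card = s).filter
          (fun S => IsCompleteOn ω S) := by
      rw [Finset.filter_filter]
    rw [this, Finset.card_filter]
    push_cast
    refine Finset.sum_congr rfl (fun S _ => ?_)
    by_cases hS : IsCompleteOn ω S <;> simp [Set.indicator_apply, hS]
  calc ∫ ω, (cliqueCount n s ω : ℝ) ∂ erdosRenyi n p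
      = ∑ S ∈ Finset.univ.filter (fun S : Finset (Fin n) => S.card = s),
          ∫ ω, Set.indicator {ω' | IsCompleteOn ω' S} (fun _ => (1 : ℝ)) ω
            ∂ erdosRenyi n p := by
        rw [integral_congr_ae (Filter.Eventually.of_forall hcount)]
        exact integral_finset_sum _ (fun S _ =>
          (integrable_const (1 : ℝ)).indicator (measurableSet_isCompleteOn S))
    _ = ∑ S ∈ Finset.univ.filter (fun S : Finset (Fin n) => S.card = s),
          p ^ (s.choose 2) := by
        refine Finset.sum_congr rfl (fun S hS => ?_)
        rw [integral_indicator_const _ (measurableSet_isCompleteOn S), measureReal_def,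
          prob_isCompleteOn p hp1 S, (Finset.mem_filter.1 hS).2]
        simp [ENNReal.toReal_pow, ENNReal.toReal_ofReal hp0]
    _ = (n.choose s : ℝ) * p ^ (s.choose 2) := by
        rw [Finset.sum_const, nsmul_eq_mul]
        congr 2
        have : (Finset.univ.filter fun S : Finset (Fin n) => S.card = s)
            = Finset.powersetCard s Finset.univ := by
          rw [Finset.powersetCard_eq_filter, Finset.powerset_univ]
        rw [this, Finset.card_powersetCard, Finset.card_univ, Fintype.card_fin]
    _ ≤ (n : ℝ) ^ (s : ℝ) * (n : ℝ) ^ (-(g n) * (s.choose 2)) := by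
        have h1 : (n.choose s : ℝ) ≤ (n : ℝ) ^ (s : ℝ) := by
          rw [Real.rpow_natCast]
          exact_mod_cast Nat.choose_le_pow n s
        have h2 : p ^ (s.choose 2) = (n : ℝ) ^ (-(g n) * (s.choose 2)) := by
          rw [hp, ← Real.rpow_natCast ((n:ℝ) ^ (-(g n))) (s.choose 2),
            ← Real.rpow_mul (Nat.cast_nonneg n)]
        rw [h2]
        exact mul_le_mul_of_nonneg_right h1 (Real.rpow_nonneg (Nat.cast_nonneg n) _)
    _ = (n : ℝ) ^ ((s : ℝ) + (-(g n) * (s.choose 2))) := by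
        rw [Real.rpow_add (by linarith : (0:ℝ) < (n:ℝ))]
    _ ≤ (n : ℝ) ^ (-2 : ℝ) := by
        apply Real.rpow_le_rpow_of_exponent_le hn1
        have hs3 : (3 : ℝ) ≤ (s : ℝ) := by
          have : 3 ≤ s := le_trans (hs₁ ▸ le_max_right _ _) hs
          exact_mod_cast this
        have hcs : 25 ≤ c * s := by
          have h1 : (25 : ℝ) / c ≤ (s : ℝ) := by
            have h2 : ⌈(25 : ℝ) / c⌉₊ ≤ s := le_trans (hs₁ ▸ le_max_left _ _) hs
            exact le_trans (Nat.le_ceil _) (by exact_mod_cast h2)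
          rw [div_le_iff₀ hc] at h1
          linarith [h1]
        have hgn : 4 * c / 5 ≤ g n := hgc n
        rw [Nat.cast_choose_two]
        nlinarith [mul_nonneg (mul_nonneg hc.le (by linarith : (0:ℝ) ≤ (s:ℝ)))
            (by linarith : (0:ℝ) ≤ (s:ℝ) - 1),
          mul_le_mul_of_nonneg_right hgn
            (by nlinarith : (0:ℝ) ≤ (s:ℝ) * ((s:ℝ) - 1) / 2),
          mul_le_mul_of_nonneg_right hcs (by linarith : (0:ℝ) ≤ (s:ℝ) - 1)]
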